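/- Let t > 0 and let (X,d) be a t-geodesic metric space. Then the identity function from (X,d) to (X,d_t), where d_t is the graph metric of the Rips graph RipsG_t(X), is bornologous; in fact d_t(x,y) ≤ 2·d(x,y)/t + 1 for all x, y ∈ X. -/

import Mathlib

open scoped ENNReal

/-- The Rips graph of a metric space at scale `t`: `[x,y]` is an edge whenever
`x ≠ y` and `d(x,y) ≤ t`. -/
def ripsGraph (X : Type u) [MetricSpace X] (t : ℝ) : SimpleGraph X where
  Adj x y := x ≠ y ∧ dist x y ≤ t
  symm := by
    constructor
    rintro x y ⟨hxy, hd⟩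
    exact ⟨hxy.symm, by rwa [dist_comm]⟩
  loopless := ⟨fun x h => h.1 rfl⟩

/-- A metric space is `t`-geodesic if every two points are joined by a `t`-chain whose
consecutive distances add up exactly to the distance between the points. -/
def TGeodesic (t : ℝ) (X : Type u) [MetricSpace X] : Prop :=
  ∀ x y : X, ∃ (k : ℕ) (c : ℕ → X), c 0 = x ∧ c k = y ∧
    (∀ i < k, dist (c i) (c (i + 1)) ≤ t) ∧
    dist x y = ∑ i ∈ Finset.range k, dist (c i) (c (i + 1))

lemma rips_edist_le_one {X : Type u} [MetricSpace X] {t : ℝ} {x y : X}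
    (h : dist x y ≤ t) : (ripsGraph X t).edist x y ≤ 1 := by
  by_cases hxy : x = y
  · subst hxy; simp [SimpleGraph.edist_self]
  · exact le_of_eq (SimpleGraph.edist_eq_one_iff_adj.mpr ⟨hxy, h⟩)

lemma dist_le_sum_chain {X : Type u} [MetricSpace X] (c : ℕ → X) (m : ℕ) :
    ∀ n, m ≤ n → dist (c m) (c n) ≤ ∑ i ∈ Finset.Ico m n, dist (c i) (c (i+1)) := by
  intro n
  induction n with
  | zero => intro h; interval_cases m; simp
  | succ n ih =>
    intro h
    rcases Nat.lt_or_ge m (n+1) with h' | h'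
    · have hmn : m ≤ n := Nat.lt_succ_iff.mp h'
      rw [Finset.sum_Ico_succ_top hmn]
      calc dist (c m) (c (n+1)) ≤ dist (c m) (c n) + dist (c n) (c (n+1)) := dist_triangle _ _ _
        _ ≤ _ := by gcongr; exact ih hmn
    · have : m = n + 1 := le_antisymm h h'
      subst this; simp

lemma rips_key {X : Type u} [MetricSpace X] {t : ℝ} (ht : 0 < t) (hX : TGeodesic t X) :
    ∀ n : ℕ, ∀ x y : X, dist x y ≤ (n + 1) * t →
      (ripsGraph X t).edist x y ≤ 2 * n + 1 := by
  intro n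
  induction n with
  | zero =>
    intro x y h
    push_cast at h
    simpa using rips_edist_le_one (by linarith)
  | succ n ih =>
    intro x y h
    by_cases hd : dist x y ≤ t
    · calc (ripsGraph X t).edist x y ≤ 1 := rips_edist_le_one hd
        _ ≤ 2 * (n+1) + 1 := by
          have : (1 : ℕ∞) ≤ 2 * (n+1 : ℕ) + 1 := by
            exact_mod_cast Nat.one_le_iff_ne_zero.mpr (by omega)
          simpa using this
    · push_neg at hd
      obtain ⟨k, c, hc0, hck, hstep, hsum⟩ := hX x y
      set cum : ℕ → ℝ := fun m => ∑ i ∈ Finset.range m, dist (c i) (c (i+1)) with hcum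
      have hcumk : t < cum k := by rw [hcum]; simpa [← hsum] using hd
      have hex : ∃ m, t < cum m := ⟨k, hcumk⟩
      classical
      set j := Nat.find hex with hj
      have hjspec : t < cum j := Nat.find_spec hex
      have hjk : j ≤ k := Nat.find_le hcumk
      have hj1 : 1 ≤ j := by
        rcases Nat.eq_zero_or_pos j with h0 | h0
        · exfalso; rw [h0] at hjspec; simp [hcum] at hjspec; linarith
        · exact h0
      have hjprev : cum (j - 1) ≤ t := by
        have := Nat.find_min hex (m := j - 1) (by omega)
        push_neg at this
        exact this
      -- dist x (c (j-1)) ≤ t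
      have h1 : dist x (c (j-1)) ≤ t := by
        have := dist_le_sum_chain c 0 (j-1) (Nat.zero_le _)
        rw [hc0] at this
        refine le_trans ?_ hjprev
        simp only [hcum]
        rwa [Finset.range_eq_Ico]
      -- step from j-1 to j
      have hstep1 : dist (c (j-1)) (c j) ≤ t := by
        have hlt : j - 1 < k := by omega
        have := hstep (j-1) hlt
        rwa [Nat.sub_add_cancel hj1] at this
      -- dist (c j) y ≤ cum k - cum j
      have h3 : dist (c j) y ≤ (n + 1) * t := by
        have hle := dist_le_sum_chain c j k hjk
        rw [hck] at hle
        have hsplit : cum j + ∑ i ∈ Finset.Ico j k, dist (c i) (c (i+1)) = cum k := by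
          rw [hcum]
          simp only [Finset.range_eq_Ico]
          exact Finset.sum_Ico_consecutive _ (Nat.zero_le _) hjk
        have : dist (c j) y ≤ cum k - cum j := by linarith
        have hck' : cum k = dist x y := hsum.symm
        have : dist (c j) y ≤ dist x y - cum j := by linarith [hck' ▸ this]
        push_cast at h ⊢
        nlinarith [hjspec]
      have e1 : (ripsGraph X t).edist x (c (j-1)) ≤ 1 := rips_edist_le_one h1
      have e2 : (ripsGraph X t).edist (c (j-1)) (c j) ≤ 1 := rips_edist_le_one hstep1
      have e3 : (ripsGraph X t).edist (c j) y ≤ 2 * n + 1 := ih (c j) y h3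
      calc (ripsGraph X t).edist x y
          ≤ (ripsGraph X t).edist x (c (j-1)) + (ripsGraph X t).edist (c (j-1)) y :=
            SimpleGraph.edist_triangle
        _ ≤ (ripsGraph X t).edist x (c (j-1)) + ((ripsGraph X t).edist (c (j-1)) (c j)
              + (ripsGraph X t).edist (c j) y) := by gcongr; exact SimpleGraph.edist_triangle
        _ ≤ 1 + (1 + (2 * n + 1)) := by gcongr
        _ = 2 * (n + 1) + 1 := by push_cast; ring

/-- for a `t`-geodesic metric space the identity `(X,d) → (X,d_t)` into
the graph metric of `RipsG_t(X)` is bornologous; in fact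
`d_t(x,y) ≤ 2·d(x,y)/t + 1` for all `x, y`. -/
theorem tGeodesic_identity_to_rips_bornologous {X : Type u} [MetricSpace X]
    (t : ℝ) (ht : 0 < t) (hX : TGeodesic t X) :
    -- the identity (X,d) → (X,d_t) is bornologous
    (∀ r : ℝ, 0 < r → ∃ c : ℝ, 0 < c ∧ ∀ x y : X,
      dist x y < r → ((ripsGraph X t).edist x y : ℝ≥0∞) < ENNReal.ofReal c) ∧
    -- in fact d_t(x,y) ≤ 2·d(x,y)/t + 1
    (∀ x y : X,
      ((ripsGraph X t).edist x y : ℝ≥0∞) ≤ ENNReal.ofReal (2 * dist x y / t + 1)) := by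
  have main : ∀ x y : X,
      ((ripsGraph X t).edist x y : ℝ≥0∞) ≤ ENNReal.ofReal (2 * dist x y / t + 1) := by
    intro x y
    by_cases hxy : x = y
    · subst hxy
      simp [SimpleGraph.edist_self]
    · set d := dist x y with hd
      have hd0 : 0 < d := dist_pos.mpr hxy
      set m : ℕ := ⌈d / t⌉₊ with hm
      have hm1 : 1 ≤ m := Nat.one_le_iff_ne_zero.mpr (by
        simp only [hm, ne_eq, Nat.ceil_eq_zero, not_le]
        positivity)
      set n : ℕ := m - 1 with hn
      have hn1 : n + 1 = m := Nat.succ_pred_eq_of_pos hm1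
      have hle : d ≤ (n + 1) * t := by
        have h1 : d / t ≤ (m : ℝ) := Nat.le_ceil _
        rw [div_le_iff₀ ht] at h1
        rw [show ((n:ℝ)+1) = (m:ℝ) by exact_mod_cast congrArg (Nat.cast (R := ℝ)) hn1]
        linarith
      have key := rips_key ht hX n x y hle
      have h2 : ((ripsGraph X t).edist x y : ℝ≥0∞) ≤ ((2 * n + 1 : ℕ) : ℝ≥0∞) := by
        have h3 : ((ripsGraph X t).edist x y : ℝ≥0∞) ≤ ((2 * (n:ℕ∞) + 1 : ℕ∞) : ℝ≥0∞) :=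
          ENat.toENNReal_le.mpr key
        refine h3.trans_eq ?_
        push_cast
        ring
      refine h2.trans ?_
      rw [← ENNReal.ofReal_natCast]
      apply ENNReal.ofReal_le_ofReal
      push_cast
      have hceil : (m : ℝ) < d / t + 1 := Nat.ceil_lt_add_one (by positivity)
      have hnm : (n : ℝ) = (m : ℝ) - 1 := by
        rw [hn, Nat.cast_sub hm1]; norm_num
      rw [mul_div_assoc]
      linarith
  refine ⟨?_, main⟩
  intro r hr
  refine ⟨2 * r / t + 2, by positivity, fun x y hxy => ?_⟩
  calc ((ripsGraph X t).edist x y : ℝ≥0∞) ≤ ENNReal.ofReal (2 * dist x y / t + 1) := main x y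
    _ < ENNReal.ofReal (2 * r / t + 2) := by
        apply (ENNReal.ofReal_lt_ofReal_iff (by positivity)).mpr
        have h1 : 2 * dist x y / t ≤ 2 * r / t := by
          gcongr
        linarith
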